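/- The map σ ↦ σ', where σ' is obtained from a flattened signed permutation σ by changing the signs of all entries that are not the bottom of a modular run of σ, is a descent-complementing involution on R_n^B: σ has a descent at position i if and only if σ' has an ascent at position i. Consequently d_{n,k} = d_{n,n-k-1}, i.e., the distribution of descents over R_n^B is symmetric. -/

import Mathlib

/-- `w` is a signed permutation of length n: a list of nonzero integers whose
absolute values form a permutation of {1,...,n}. -/
def IsSignedPerm (n : ℕ) (w : List ℤ) : Prop :=
  w.length = n ∧ (w.map Int.natAbs).Perm (List.range' 1 n)

/-- Position `i` is the bottom of a modular run (mrun) of `w`: either `i = 0`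
or the previous entry is larger in absolute value. -/
def IsBottom (w : List ℤ) (i : ℕ) : Prop :=
  i = 0 ∨ (w.getD i 0).natAbs < (w.getD (i - 1) 0).natAbs

instance (w : List ℤ) (i : ℕ) : Decidable (IsBottom w i) := by
  unfold IsBottom; infer_instance

/-- `w ∈ R_n^B`: `w` is a signed permutation of length n which is the flattening of a
type B merging-free partition without zero block; equivalently the bottoms of its
mruns are positive and increasing, and the absolute value of the top of each mrun
exceeds the bottom of the following mrun. -/
def MemR (n : ℕ) (w : List ℤ) : Prop :=
  IsSignedPerm n w ∧
  (∀ i, i < n → IsBottom w i → 0 < w.getD i 0) ∧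
  (∀ i j, i < j → j < n → IsBottom w i → IsBottom w j → w.getD i 0 < w.getD j 0) ∧
  (∀ j, 0 < j → j < n → IsBottom w j → w.getD j 0 < ((w.getD (j - 1) 0).natAbs : ℤ))

/-- The number of descents of `w`: positions i with `w_i > w_{i+1}`. -/
def des (w : List ℤ) : ℕ :=
  ((List.range (w.length - 1)).filter
    (fun i => decide (w.getD (i + 1) 0 < w.getD i 0))).length

/-- The major index of `w`: sum of the (1-based) descent positions. -/
def maj (w : List ℤ) : ℕ :=
  ∑ i ∈ Finset.range (w.length - 1),
    if w.getD (i + 1) 0 < w.getD i 0 then i + 1 else 0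

/-- The number of modular runs (mruns) of `w`. -/
def numRuns (w : List ℤ) : ℕ :=
  ((List.range w.length).filter (fun i => decide (IsBottom w i))).length

/-- `d n k`: the number of permutations in `R_n^B` having `k` descents. -/
noncomputable def dcount (n k : ℕ) : ℕ :=
  Nat.card {w : List ℤ // MemR n w ∧ des w = k}

/-- `τ` lies in the valley-hopping orbit of `σ`: same absolute values everywhere,
and the same (positive) entries at the bottoms of the mruns of `σ`. -/
def InOrb (σ τ : List ℤ) : Prop :=
  τ.length = σ.length ∧ ∀ i, i < σ.length →
    (τ.getD i 0).natAbs = (σ.getD i 0).natAbs ∧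
    (IsBottom σ i → τ.getD i 0 = σ.getD i 0)

/-- The map flipping the signs of all entries of `w` that are not bottoms of mruns. -/
def flipNonBottoms (w : List ℤ) : List ℤ :=
  w.mapIdx (fun i x => if IsBottom w i then x else -x)

-- basic lemmas
theorem flip_length (w : List ℤ) : (flipNonBottoms w).length = w.length := by
  simp [flipNonBottoms]

theorem flip_getD (w : List ℤ) (i : ℕ) (h : i < w.length) :
    (flipNonBottoms w).getD i 0
      = if IsBottom w i then w.getD i 0 else -(w.getD i 0) := by
  rw [List.getD_eq_getElem _ _ (by simpa [flipNonBottoms] using h), List.getD_eq_getElem _ _ h]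
  simp [flipNonBottoms]

theorem flip_natAbs (w : List ℤ) (i : ℕ) :
    ((flipNonBottoms w).getD i 0).natAbs = (w.getD i 0).natAbs := by
  by_cases h : i < w.length
  · rw [flip_getD w i h]; split <;> simp
  · rw [List.getD_eq_default _ _ (by simpa [flipNonBottoms] using le_of_not_gt h),
      List.getD_eq_default _ _ (le_of_not_gt h)]

theorem flip_bottom (w : List ℤ) (i : ℕ) :
    IsBottom (flipNonBottoms w) i ↔ IsBottom w i := by
  unfold IsBottom; rw [flip_natAbs, flip_natAbs]

theorem flip_getD_bottom (w : List ℤ) (i : ℕ) (h : i < w.length) (hb : IsBottom w i) :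
    (flipNonBottoms w).getD i 0 = w.getD i 0 := by
  rw [flip_getD w i h, if_pos hb]

theorem flip_flip' (w : List ℤ) : flipNonBottoms (flipNonBottoms w) = w := by
  apply List.ext_getElem (by rw [flip_length, flip_length])
  intro i h1 h2
  have h1' : i < (flipNonBottoms w).length := by rw [flip_length]; exact h2
  rw [← List.getD_eq_getElem _ 0 h1, ← List.getD_eq_getElem _ 0 h2]
  rw [flip_getD _ i h1']
  by_cases hb : IsBottom w i
  · rw [if_pos ((flip_bottom w i).2 hb), flip_getD_bottom w i h2 hb]
  · rw [if_neg (fun hc => hb ((flip_bottom w i).1 hc)), flip_getD w i h2, if_neg hb, neg_neg]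

-- entries facts
theorem entry_pos {n : ℕ} {w : List ℤ} (hw : IsSignedPerm n w) {i : ℕ} (h : i < n) :
    0 < (w.getD i 0).natAbs := by
  obtain ⟨hl, hp⟩ := hw
  have hi : i < w.length := hl ▸ h
  rw [List.getD_eq_getElem _ _ hi]
  have hm : (w[i]).natAbs ∈ w.map Int.natAbs := by
    exact List.mem_map_of_mem (w.getElem_mem hi)
  have := (hp.mem_iff).1 hm
  have := (List.mem_range'_1.1 this).1
  omega

theorem entry_ne {n : ℕ} {w : List ℤ} (hw : IsSignedPerm n w) {i j : ℕ}
    (hij : i ≠ j) (hi : i < n) (hj : j < n) :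
    (w.getD i 0).natAbs ≠ (w.getD j 0).natAbs := by
  obtain ⟨hl, hp⟩ := hw
  have hi' : i < w.length := hl ▸ hi
  have hj' : j < w.length := hl ▸ hj
  have hnd : (w.map Int.natAbs).Nodup := hp.nodup_iff.2 (List.nodup_range' (s := 1) (n := n))
  rw [List.getD_eq_getElem _ _ hi', List.getD_eq_getElem _ _ hj']
  intro hc
  have h1 : (w.map Int.natAbs)[i]'(by simpa using hi') = (w.map Int.natAbs)[j]'(by simpa using hj') := by
    simpa using hc
  exact hij (hnd.getElem_inj_iff.1 h1)

-- MemR preserved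
theorem memR_flip {n : ℕ} {w : List ℤ} (hw : MemR n w) : MemR n (flipNonBottoms w) := by
  obtain ⟨⟨hl, hp⟩, h1, h2, h3⟩ := hw
  have hl' : (flipNonBottoms w).length = n := by rw [flip_length]; exact hl
  have hmap : (flipNonBottoms w).map Int.natAbs = w.map Int.natAbs := by
    apply List.ext_getElem (by simp [flip_length])
    intro i hh1 hh2
    simp only [List.getElem_map]
    have hi : i < w.length := by simpa using hh2
    have := flip_natAbs w i
    rwa [List.getD_eq_getElem _ _ (by rwa [flip_length]), List.getD_eq_getElem _ _ hi] at this
  refine ⟨⟨hl', hmap ▸ hp⟩, ?_, ?_, ?_⟩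
  · intro i hi hb
    rw [flip_getD_bottom w i (hl ▸ hi) ((flip_bottom w i).1 hb)]
    exact h1 i hi ((flip_bottom w i).1 hb)
  · intro i j hij hj hbi hbj
    rw [flip_getD_bottom w i (hl ▸ (hij.trans hj)) ((flip_bottom w i).1 hbi),
      flip_getD_bottom w j (hl ▸ hj) ((flip_bottom w j).1 hbj)]
    exact h2 i j hij hj ((flip_bottom w i).1 hbi) ((flip_bottom w j).1 hbj)
  · intro j hj0 hj hbj
    rw [flip_getD_bottom w j (hl ▸ hj) ((flip_bottom w j).1 hbj), flip_natAbs]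
    exact h3 j hj0 hj ((flip_bottom w j).1 hbj)

-- descent complement
theorem desc_iff {n : ℕ} {w : List ℤ} (hw : MemR n w) (i : ℕ) (hi : i + 1 < n) :
    (w.getD (i + 1) 0 < w.getD i 0 ↔
      ¬ ((flipNonBottoms w).getD (i + 1) 0 < (flipNonBottoms w).getD i 0)) := by
  obtain ⟨hsp, h1, h2, h3⟩ := hw
  have hl := hsp.1
  have hi' : i < n := Nat.lt_of_succ_lt hi
  have hiw : i < w.length := hl ▸ hi'
  have hiw1 : i + 1 < w.length := hl ▸ hi
  have hne : (w.getD i 0).natAbs ≠ (w.getD (i+1) 0).natAbs :=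
    entry_ne hsp (by omega) hi' hi
  have hpos : 0 < (w.getD i 0).natAbs := entry_pos hsp hi'
  have hpos1 : 0 < (w.getD (i+1) 0).natAbs := entry_pos hsp hi
  rw [flip_getD w (i+1) hiw1, flip_getD w i hiw]
  by_cases hbb : IsBottom w (i+1) <;> by_cases hbi : IsBottom w i
  · -- both bottoms: contradiction
    have hblt : (w.getD (i+1) 0).natAbs < (w.getD i 0).natAbs := by
      rcases hbb with h | h
      · omega
      · simpa using h
    have hbla : w.getD (i+1) 0 < ((w.getD i 0).natAbs : ℤ) := by
      have := h3 (i+1) (Nat.succ_pos i) hi hbb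
      simpa using this
    have hapos : 0 < w.getD i 0 := h1 i hi' hbi
    have hlt : w.getD i 0 < w.getD (i+1) 0 := h2 i (i+1) (Nat.lt_succ_self i) hi hbi hbb
    rw [if_pos hbb, if_pos hbi]
    omega
  · have hblt : (w.getD (i+1) 0).natAbs < (w.getD i 0).natAbs := by
      rcases hbb with h | h
      · omega
      · simpa using h
    have hbpos : 0 < w.getD (i+1) 0 := h1 (i+1) hi hbb
    have hbla : w.getD (i+1) 0 < ((w.getD i 0).natAbs : ℤ) := by
      have := h3 (i+1) (Nat.succ_pos i) hi hbb
      simpa using this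
    rw [if_pos hbb, if_neg hbi]
    omega
  · have hab : ¬ ((w.getD (i+1) 0).natAbs < (w.getD i 0).natAbs) := by
      intro h; exact hbb (Or.inr (by simpa using h))
    have hapos : 0 < w.getD i 0 := h1 i hi' hbi
    rw [if_neg hbb, if_pos hbi]
    omega
  · have hab : ¬ ((w.getD (i+1) 0).natAbs < (w.getD i 0).natAbs) := by
      intro h; exact hbb (Or.inr (by simpa using h))
    rw [if_neg hbb, if_neg hbi]
    omega

-- des as Finset card
theorem des_eq_card (w : List ℤ) :
    des w = ((Finset.range (w.length - 1)).filter
      (fun i => w.getD (i + 1) 0 < w.getD i 0)).card := by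
  rfl

theorem des_flip {n : ℕ} {w : List ℤ} (hw : MemR n w) :
    des (flipNonBottoms w) = (n - 1) - des w := by
  have hl := hw.1.1
  have hl' : (flipNonBottoms w).length = n := by rw [flip_length, hl]
  rw [des_eq_card, des_eq_card, hl, hl']
  have hcongr : ((Finset.range (n - 1)).filter
      (fun i => (flipNonBottoms w).getD (i + 1) 0 < (flipNonBottoms w).getD i 0)) =
    ((Finset.range (n - 1)).filter
      (fun i => w.getD i 0 ≤ w.getD (i + 1) 0)) := by
    refine Finset.filter_congr fun i hi => ?_
    have hi' : i + 1 < n := by have := Finset.mem_range.1 hi; omega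
    have h := desc_iff hw i hi'
    constructor
    · intro hc
      by_contra hq
      exact (h.1 (not_le.1 hq)) hc
    · intro hc
      by_contra hq
      exact absurd (h.2 hq) (not_lt.2 hc)
  rw [hcongr]
  have h2 := Finset.card_filter_add_card_filter_not
    (s := Finset.range (n-1)) (p := fun i => w.getD (i + 1) 0 < w.getD i 0)
  simp only [not_lt, Finset.card_range] at h2
  omega

theorem des_le {n : ℕ} {w : List ℤ} (hw : MemR n w) : des w ≤ n - 1 := by
  have hl := hw.1.1
  have : des w ≤ (List.range (w.length - 1)).length := List.length_filter_le _ _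
  simpa [hl] using this

theorem flip_involution_descent_complement (n : ℕ) (hn : 1 ≤ n) :
    (∀ w, MemR n w →
      MemR n (flipNonBottoms w) ∧
      flipNonBottoms (flipNonBottoms w) = w ∧
      (∀ i, i + 1 < n →
        (w.getD (i + 1) 0 < w.getD i 0 ↔
          ¬ ((flipNonBottoms w).getD (i + 1) 0 < (flipNonBottoms w).getD i 0)))) ∧
    (∀ k, k ≤ n - 1 → dcount n k = dcount n (n - 1 - k)) := by
  constructor
  · intro w hw
    exact ⟨memR_flip hw, flip_flip' w, fun i hi => desc_iff hw i hi⟩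
  · intro k hk
    apply Nat.card_congr
    refine ⟨fun x => ⟨flipNonBottoms x.1, memR_flip x.2.1, by
        rw [des_flip x.2.1, x.2.2]⟩,
      fun x => ⟨flipNonBottoms x.1, memR_flip x.2.1, by
        rw [des_flip x.2.1, x.2.2, Nat.sub_sub_self hk]⟩,
      fun x => ?_, fun x => ?_⟩
    · exact Subtype.ext (flip_flip' x.1)
    · exact Subtype.ext (flip_flip' x.1)
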